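/- For every 1 ≤ p < ∞ and every sequence (xₙ)ₙ in a Banach space X with ∑ₙ ‖xₙ‖^p < ∞, the p-convex hull p-co((xₙ)) = { ∑ₙ αₙ xₙ : (αₙ) ∈ ℓ_{p'}, ‖(αₙ)‖_{ℓ_{p'}} ≤ 1 } is a compact subset of X. -/

import Mathlib

noncomputable section

open scoped ENNReal NNReal

/-- The conjugate exponent `p'` of `p : ℝ≥0∞`, characterized by `1/p + 1/p' = 1`
(with the conventions `1' = ∞` and `∞' = 1`). -/
def conjExp (p : ℝ≥0∞) : ℝ≥0∞ := (1 - 1/p)⁻¹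

theorem one_le_conjExp (p : ℝ≥0∞) : 1 ≤ conjExp p := by
  rw [conjExp]
  rw [ENNReal.one_le_inv]
  exact tsub_le_self

instance (p : ℝ≥0∞) : Fact (1 ≤ conjExp p) := ⟨one_le_conjExp p⟩

/-- The `ℓ_p`-norm `(∑ₙ ‖y n‖^p)^(1/p)` of a `p`-summable sequence `y`. -/
def lpNorm {X : Type*} [NormedAddCommGroup X] (p : ℝ≥0∞) (y : ℕ → X)
    (hy : Memℓp y p) : ℝ :=
  ‖(⟨y, hy⟩ : lp (fun _ : ℕ => X) p)‖

/-- The `p`-convex hull of a sequence `x` in `X`, taken with respect to the exponent `q`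
(in the applications below, `q` is the conjugate exponent of `p`):
the set of all sums `∑ₙ αₙ • xₙ` with `(αₙ) ∈ ℓ_q`, `‖(αₙ)‖_q ≤ 1`. -/
def pCo (𝕜 : Type*) [RCLike 𝕜] {X : Type*} [NormedAddCommGroup X] [NormedSpace 𝕜 X]
    (q : ℝ≥0∞) (x : ℕ → X) : Set X :=
  {v | ∃ α : lp (fun _ : ℕ => 𝕜) q, ‖α‖ ≤ 1 ∧ HasSum (fun n => α n • x n) v}

/-- A set `K ⊆ X` is relatively `p`-compact if it is contained in the `p`-convex hull of a
`p`-summable sequence of `X`. -/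
def RelPCompact (𝕜 : Type*) [RCLike 𝕜] {X : Type*} [NormedAddCommGroup X]
    [NormedSpace 𝕜 X] (p : ℝ≥0∞) (K : Set X) : Prop :=
  ∃ x : ℕ → X, Memℓp x p ∧ K ⊆ pCo 𝕜 (conjExp p) x

/-- A bounded linear map is `p`-compact if the image of the closed unit ball is contained in
the `p`-convex hull of a `p`-summable sequence of the target space. -/
def IsPCompact (𝕜 : Type*) [RCLike 𝕜] {X Y : Type*}
    [SeminormedAddCommGroup X] [NormedSpace 𝕜 X]
    [NormedAddCommGroup Y] [NormedSpace 𝕜 Y] (p : ℝ≥0∞) (T : X →L[𝕜] Y) : Prop :=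
  ∃ y : ℕ → Y, Memℓp y p ∧ T '' Metric.closedBall 0 1 ⊆ pCo 𝕜 (conjExp p) y

/-- The `p`-compact norm `κ_p(T) = inf { ‖(yₙ)‖_p : T(B_X) ⊆ p-co((yₙ)) }`. -/
def kappa (𝕜 : Type*) [RCLike 𝕜] {X Y : Type*}
    [SeminormedAddCommGroup X] [NormedSpace 𝕜 X]
    [NormedAddCommGroup Y] [NormedSpace 𝕜 Y] (p : ℝ≥0∞) (T : X →L[𝕜] Y) : ℝ :=
  sInf {c : ℝ | ∃ (y : ℕ → Y) (hy : Memℓp y p),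
    T '' Metric.closedBall 0 1 ⊆ pCo 𝕜 (conjExp p) y ∧ c = lpNorm p y hy}

/-- `C` is an upper bound for the weak `ℓ_q`-norm of the sequence `(x'ₙ)` of functionals,
i.e. `‖(x'ₙ(x))ₙ‖_q ≤ C‖x‖` for every `x` (equivalently,
`sup_{‖x‖ ≤ 1} ‖(x'ₙ(x))ₙ‖_q ≤ C`). -/
def WeakLpBound (𝕜 : Type*) [RCLike 𝕜] {X : Type*} [SeminormedAddCommGroup X]
    [NormedSpace 𝕜 X] (q : ℝ≥0∞) (x' : ℕ → (X →L[𝕜] 𝕜)) (C : ℝ) : Prop :=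
  ∀ x : X, ∃ h : Memℓp (fun n => x' n x) q, lpNorm q (fun n => x' n x) h ≤ C * ‖x‖

/-- A bounded linear map `T : X → Y` is right `p`-nuclear if `T x = ∑ₙ x'ₙ(x) yₙ` for some
weakly `p'`-summable sequence `(x'ₙ)` in `X'` and some `(yₙ)` with `∑ₙ ‖yₙ‖^p < ∞`. -/
def IsRightPNuclear (𝕜 : Type*) [RCLike 𝕜] {X Y : Type*}
    [SeminormedAddCommGroup X] [NormedSpace 𝕜 X]
    [NormedAddCommGroup Y] [NormedSpace 𝕜 Y] (p : ℝ≥0∞) (T : X →L[𝕜] Y) : Prop :=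
  ∃ (x' : ℕ → (X →L[𝕜] 𝕜)) (y : ℕ → Y) (C : ℝ), 0 ≤ C ∧
    WeakLpBound 𝕜 (conjExp p) x' C ∧ Memℓp y p ∧
    ∀ x : X, HasSum (fun n => x' n x • y n) (T x)

/-- The right `p`-nuclear norm
`ν^p(T) = inf ‖(x'ₙ)‖^w_{p'} ⬝ (∑ₙ ‖yₙ‖^p)^{1/p}` over all representations of `T`. -/
def nuP (𝕜 : Type*) [RCLike 𝕜] {X Y : Type*}
    [SeminormedAddCommGroup X] [NormedSpace 𝕜 X]
    [NormedAddCommGroup Y] [NormedSpace 𝕜 Y] (p : ℝ≥0∞) (T : X →L[𝕜] Y) : ℝ :=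
  sInf {c : ℝ | ∃ (x' : ℕ → (X →L[𝕜] 𝕜)) (y : ℕ → Y) (C : ℝ) (hy : Memℓp y p), 0 ≤ C ∧
    WeakLpBound 𝕜 (conjExp p) x' C ∧
    (∀ x : X, HasSum (fun n => x' n x • y n) (T x)) ∧
    c = C * lpNorm p y hy}
section AuxCompact
lemma conjExp_one : conjExp 1 = ∞ := by simp [conjExp]

lemma conjExp_conj {p : ℝ≥0∞} (hp1 : 1 < p) (hp : p ≠ ∞) :
    p.toReal.HolderConjugate (conjExp p).toReal := by
  have hpinv_lt : p⁻¹ < 1 := ENNReal.inv_lt_one.mpr hp1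
  have hq_inv : (conjExp p)⁻¹ = 1 - p⁻¹ := by
    rw [conjExp, one_div, inv_inv]
  have hq_inv_ne : (conjExp p)⁻¹ ≠ 0 := by
    rw [hq_inv]
    exact (tsub_pos_iff_lt.mpr hpinv_lt).ne'
  have hqne : conjExp p ≠ ∞ := by
    intro h
    apply hq_inv_ne
    rw [h, ENNReal.inv_top]
  have hqne0 : conjExp p ≠ 0 := by
    intro h
    simpa [h] using one_le_conjExp p
  have hsum : p⁻¹ + (conjExp p)⁻¹ = 1 := by
    rw [hq_inv, add_tsub_cancel_of_le hpinv_lt.le]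
  rw [Real.holderConjugate_iff]
  constructor
  · have : p ≠ ∞ := hp
    rw [← ENNReal.toReal_one]
    exact ENNReal.toReal_lt_toReal (by simp) hp |>.mpr hp1
  · have h2 : p⁻¹ ≠ ∞ := ENNReal.inv_ne_top.mpr (by positivity)
    have h3 : (conjExp p)⁻¹ ≠ ∞ := ENNReal.inv_ne_top.mpr hqne0
    have h1 : (p⁻¹).toReal + ((conjExp p)⁻¹).toReal = 1 := by
      rw [← ENNReal.toReal_add h2 h3, hsum, ENNReal.toReal_one]
    simpa [ENNReal.toReal_inv] using h1

variable {𝕜 X : Type*} [RCLike 𝕜] [NormedAddCommGroup X] [NormedSpace 𝕜 X]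

lemma holder_aux (p : ℝ≥0∞) (hp1 : 1 ≤ p) (hp : p ≠ ∞) (g : ℕ → X) (hg : Memℓp g p)
    (α : lp (fun _ : ℕ => 𝕜) (conjExp p)) :
    Summable (fun n => ‖α n • g n‖) ∧
      ∑' n, ‖α n • g n‖ ≤ ‖α‖ * ‖(⟨g, hg⟩ : lp (fun _ : ℕ => X) p)‖ := by
  have hq0 : conjExp p ≠ 0 := by
    intro h; simpa [h] using one_le_conjExp p
  simp only [norm_smul]
  rcases eq_or_lt_of_le hp1 with h1 | h1
  · -- p = 1
    subst h1
    have hpt : (0:ℝ) < (1 : ℝ≥0∞).toReal := by simp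
    have hgs : Summable fun n => ‖g n‖ := by
      simpa using hg.summable hpt
    have hle : ∀ n, ‖α n‖ * ‖g n‖ ≤ ‖α‖ * ‖g n‖ := fun n =>
      mul_le_mul_of_nonneg_right (lp.norm_apply_le_norm hq0 α n) (norm_nonneg _)
    have hsum : Summable fun n => ‖α n‖ * ‖g n‖ :=
      Summable.of_nonneg_of_le (fun n => by positivity) hle (hgs.mul_left ‖α‖)
    refine ⟨hsum, ?_⟩
    calc ∑' n, ‖α n‖ * ‖g n‖ ≤ ∑' n, ‖α‖ * ‖g n‖ :=
          Summable.tsum_le_tsum hle hsum (hgs.mul_left ‖α‖)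
      _ = ‖α‖ * ∑' n, ‖g n‖ := tsum_mul_left
      _ = ‖α‖ * ‖(⟨g, hg⟩ : lp (fun _ : ℕ => X) 1)‖ := by
          rw [lp.norm_eq_tsum_rpow hpt]
          simp
  · -- 1 < p
    have hconj := conjExp_conj h1 hp
    set G : lp (fun _ : ℕ => X) p := ⟨g, hg⟩ with hG
    have hf₂ := lp.hasSum_norm hconj.pos G
    have hg₂ := lp.hasSum_norm hconj.symm.pos α
    obtain ⟨C, hC0, hC', hC⟩ := Real.inner_le_Lp_mul_Lq_hasSum_of_nonneg hconj
      (lp.norm_nonneg' G) (lp.norm_nonneg' α) (fun i => norm_nonneg _)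
      (fun i => norm_nonneg _) hf₂ hg₂
    have hsum : Summable fun n => ‖α n‖ * ‖g n‖ := by
      have := hC.summable
      simpa [mul_comm, hG] using this
    refine ⟨hsum, ?_⟩
    have : ∑' n, ‖α n‖ * ‖g n‖ = C := by
      rw [← hC.tsum_eq]
      simp [mul_comm, hG]
    rw [this, mul_comm]
    exact hC'

lemma memℓp_tail (p : ℝ≥0∞) (hp1 : 1 ≤ p) (hp : p ≠ ∞) (x : ℕ → X) (hx : Memℓp x p) (N : ℕ) :
    Memℓp (fun n => if n < N then 0 else x n) p := by
  have hpt : 0 < p.toReal := ENNReal.toReal_pos (by positivity) hp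
  apply memℓp_gen
  refine Summable.of_nonneg_of_le (fun n => by positivity) (fun n => ?_) (hx.summable hpt)
  by_cases h : n < N <;> simp [h, Real.zero_rpow hpt.ne', Real.rpow_le_rpow, norm_nonneg]
  · positivity

lemma tendsto_tailNorm (p : ℝ≥0∞) (hp1 : 1 ≤ p) (hp : p ≠ ∞) (x : ℕ → X) (hx : Memℓp x p) :
    Filter.Tendsto (fun N => ‖(⟨fun n => if n < N then 0 else x n, memℓp_tail p hp1 hp x hx N⟩ :
      lp (fun _ : ℕ => X) p)‖) Filter.atTop (nhds 0) := by
  have hpt : 0 < p.toReal := ENNReal.toReal_pos (by positivity) hp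
  have hmask : ∀ N, Summable (fun n => ‖if n < N then (0:X) else x n‖ ^ p.toReal) :=
    fun N => (memℓp_tail p hp1 hp x hx N).summable hpt
  have hs : ∀ N, ‖(⟨fun n => if n < N then 0 else x n, memℓp_tail p hp1 hp x hx N⟩ :
      lp (fun _ : ℕ => X) p)‖ = (∑' k, ‖x (k + N)‖ ^ p.toReal) ^ (1 / p.toReal) := by
    intro N
    rw [lp.norm_eq_tsum_rpow hpt]
    congr 1
    rw [← Summable.sum_add_tsum_nat_add N (hmask N)]
    have h1 : ∀ n ∈ Finset.range N, ‖if n < N then (0:X) else x n‖ ^ p.toReal = 0 := by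
      intro n hn
      rw [Finset.mem_range] at hn
      simp [hn, Real.zero_rpow hpt.ne']
    rw [Finset.sum_congr rfl h1]
    simp only [Finset.sum_const_zero, zero_add]
    congr 1
    ext k
    simp [Nat.not_lt.mpr (Nat.le_add_left N k)]
  simp only [hs]
  have htail : Filter.Tendsto (fun N => ∑' k, ‖x (k + N)‖ ^ p.toReal)
      Filter.atTop (nhds 0) := tendsto_sum_nat_add (fun n => ‖x n‖ ^ p.toReal)
  have := htail.rpow_const (p := 1 / p.toReal) (Or.inr (by positivity))
  simpa [Real.zero_rpow (by positivity : p.toReal⁻¹ ≠ 0)] using this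

set_option maxHeartbeats 1000000 in
lemma tail_est [CompleteSpace X] (p : ℝ≥0∞) (hp1 : 1 ≤ p) (hp : p ≠ ∞) (x : ℕ → X) (hx : Memℓp x p)
    (α : lp (fun _ : ℕ => 𝕜) (conjExp p)) (N : ℕ) :
    ‖(∑' n, α n • x n) - ∑ n ∈ Finset.range N, α n • x n‖ ≤
      ‖α‖ * ‖(⟨fun n => if n < N then 0 else x n, memℓp_tail p hp1 hp x hx N⟩ :
        lp (fun _ : ℕ => X) p)‖ := by
  classical
  have hsum := (holder_aux p hp1 hp x hx α).1
  have hS : Summable (fun n => α n • x n) := hsum.of_norm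
  have key := Summable.sum_add_tsum_nat_add (f := fun n => α n • x n) N hS
  have hdiff : (∑' n, α n • x n) - ∑ n ∈ Finset.range N, α n • x n
      = ∑' k, α (k + N) • x (k + N) := by
    rw [← key]; abel
  rw [hdiff]
  have hmask := holder_aux p hp1 hp _ (memℓp_tail p hp1 hp x hx N) α
  have hmz : ∀ n ∈ Finset.range N, ‖α n • (if n < N then (0:X) else x n)‖ = 0 := by
    intro n hn
    rw [Finset.mem_range] at hn
    simp [hn]
  have htsum_shift : ∑' k, ‖α (k + N) • x (k + N)‖
      = ∑' n, ‖α n • (if n < N then (0:X) else x n)‖ := by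
    rw [← Summable.sum_add_tsum_nat_add (f := fun n => ‖α n • (if n < N then (0:X) else x n)‖) N hmask.1,
      Finset.sum_congr rfl hmz]
    simp only [Finset.sum_const_zero, zero_add]
    congr 1
    ext k
    simp [Nat.not_lt.mpr (Nat.le_add_left N k)]
  calc ‖∑' k, α (k + N) • x (k + N)‖ ≤ ∑' k, ‖α (k + N) • x (k + N)‖ := by
        apply norm_tsum_le_tsum_norm
        exact (summable_nat_add_iff N).2 hsum
    _ = ∑' n, ‖α n • (if n < N then (0:X) else x n)‖ := htsum_shift
    _ ≤ _ := hmask.2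

end AuxCompact

set_option maxHeartbeats 1000000 in
/-- For `1 ≤ p < ∞` and a sequence `(xₙ)` in a Banach space `X` with `∑ₙ ‖xₙ‖^p < ∞`,
the `p`-convex hull `{ ∑ₙ αₙ xₙ : ‖(αₙ)‖_{ℓ_{p'}} ≤ 1 }` is a compact subset of `X`. -/
theorem isCompact_pCo {𝕜 X : Type*} [RCLike 𝕜]
    [NormedAddCommGroup X] [NormedSpace 𝕜 X] [CompleteSpace X]
    (p : ℝ≥0∞) (hp1 : 1 ≤ p) (hp : p ≠ ∞) (x : ℕ → X) (hx : Memℓp x p) :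
    IsCompact (pCo 𝕜 (conjExp p) x) := by
  classical
  have hq0 : conjExp p ≠ 0 := fun h => by simpa [h] using one_le_conjExp p
  apply IsSeqCompact.isCompact
  intro u hu
  choose α hα1 hα2 using hu
  have hcomp : IsCompact {f : ℕ → 𝕜 | ∀ n, f n ∈ Metric.closedBall (0:𝕜) 1} :=
    isCompact_pi_infinite fun _ => isCompact_closedBall _ _
  have hmem : ∀ k, (fun n => α k n) ∈ {f : ℕ → 𝕜 | ∀ n, f n ∈ Metric.closedBall (0:𝕜) 1} := by
    intro k n
    simp only [Set.mem_setOf_eq, Metric.mem_closedBall, dist_zero_right]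
    exact (lp.norm_apply_le_norm hq0 (α k) n).trans (hα1 k)
  obtain ⟨β, hβmem, φ, hφ, hconv⟩ := hcomp.isSeqCompact hmem
  have hptw : ∀ n : ℕ, Filter.Tendsto (fun j => α (φ j) n) Filter.atTop (nhds (β n)) := by
    intro n
    rw [tendsto_pi_nhds] at hconv
    exact hconv n
  have hβb : ∀ n, ‖β n‖ ≤ 1 := fun n => by
    simpa [dist_zero_right] using hβmem n
  have hβ : ∃ h : Memℓp β (conjExp p), ‖(⟨β, h⟩ : lp (fun _ : ℕ => 𝕜) (conjExp p))‖ ≤ 1 := by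
    rcases eq_or_lt_of_le hp1 with h1 | h1
    · rw [← h1, conjExp_one]
      refine ⟨memℓp_infty ⟨1, ?_⟩, ?_⟩
      · rintro r ⟨n, rfl⟩; exact hβb n
      · exact lp.norm_le_of_forall_le zero_le_one hβb
    · have hconj := conjExp_conj h1 hp
      have hqt : 0 < (conjExp p).toReal := hconj.symm.pos
      have hbound : ∀ s : Finset ℕ, ∑ n ∈ s, ‖β n‖ ^ (conjExp p).toReal ≤ 1 := by
        intro s
        have hlim : Filter.Tendsto (fun j => ∑ n ∈ s, ‖α (φ j) n‖ ^ (conjExp p).toReal)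
            Filter.atTop (nhds (∑ n ∈ s, ‖β n‖ ^ (conjExp p).toReal)) :=
          tendsto_finset_sum _ fun n _ => ((hptw n).norm.rpow_const (Or.inr hqt.le))
        refine le_of_tendsto hlim (Filter.Eventually.of_forall fun j => ?_)
        calc ∑ n ∈ s, ‖α (φ j) n‖ ^ (conjExp p).toReal
            ≤ ‖α (φ j)‖ ^ (conjExp p).toReal := lp.sum_rpow_le_norm_rpow hqt _ s
          _ ≤ 1 := by
              rw [show (1:ℝ) = 1 ^ (conjExp p).toReal from (Real.one_rpow _).symm]
              exact Real.rpow_le_rpow (norm_nonneg _) (hα1 (φ j)) hqt.le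
      refine ⟨memℓp_gen' hbound, ?_⟩
      refine lp.norm_le_of_forall_sum_le hqt zero_le_one fun s => ?_
      rw [Real.one_rpow]
      exact hbound s
  obtain ⟨hβℓ, hβnorm⟩ := hβ
  set B : lp (fun _ : ℕ => 𝕜) (conjExp p) := ⟨β, hβℓ⟩ with hB
  have hsumB := (holder_aux p hp1 hp x hx B).1
  have hSB : Summable fun n => B n • x n := hsumB.of_norm
  refine ⟨∑' n, B n • x n, ⟨B, hβnorm, hSB.hasSum⟩, φ, hφ, ?_⟩
  rw [Metric.tendsto_atTop]
  intro ε hε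
  have htail := tendsto_tailNorm p hp1 hp x hx
  obtain ⟨N, hN⟩ := (htail.eventually (gt_mem_nhds (by positivity : (0:ℝ) < ε/4))).exists
  set t : ℝ := ‖(⟨fun n => if n < N then 0 else x n, memℓp_tail p hp1 hp x hx N⟩ :
    lp (fun _ : ℕ => X) p)‖ with ht
  have ht0 : 0 ≤ t := by rw [ht]; exact lp.norm_nonneg' _
  have hPQ : Filter.Tendsto (fun j => ∑ n ∈ Finset.range N, α (φ j) n • x n)
      Filter.atTop (nhds (∑ n ∈ Finset.range N, β n • x n)) :=
    tendsto_finset_sum _ fun n _ => (hptw n).smul_const (x n)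
  rw [Metric.tendsto_atTop] at hPQ
  obtain ⟨J, hJ⟩ := hPQ (ε/4) (by positivity)
  refine ⟨J, fun j hj => ?_⟩
  have e1 : ‖u (φ j) - ∑ n ∈ Finset.range N, α (φ j) n • x n‖ ≤ t := by
    have h := tail_est p hp1 hp x hx (α (φ j)) N
    rw [(hα2 (φ j)).tsum_eq] at h
    calc ‖u (φ j) - ∑ n ∈ Finset.range N, α (φ j) n • x n‖ ≤ ‖α (φ j)‖ * t := h
      _ ≤ 1 * t := mul_le_mul_of_nonneg_right (hα1 _) ht0
      _ = t := one_mul t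
  have e2 : ‖(∑' n, B n • x n) - ∑ n ∈ Finset.range N, β n • x n‖ ≤ t := by
    have h := tail_est p hp1 hp x hx B N
    calc ‖(∑' n, B n • x n) - ∑ n ∈ Finset.range N, β n • x n‖ ≤ ‖B‖ * t := h
      _ ≤ 1 * t := mul_le_mul_of_nonneg_right hβnorm ht0
      _ = t := one_mul t
  have e3 : ‖(∑ n ∈ Finset.range N, α (φ j) n • x n) - ∑ n ∈ Finset.range N, β n • x n‖ < ε/4 := by
    have := hJ j hj
    rwa [dist_eq_norm] at this
  have hsplit : u (φ j) - ∑' n, B n • x n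
      = (u (φ j) - ∑ n ∈ Finset.range N, α (φ j) n • x n)
        + ((∑ n ∈ Finset.range N, α (φ j) n • x n) - ∑ n ∈ Finset.range N, β n • x n)
        + ((∑ n ∈ Finset.range N, β n • x n) - ∑' n, B n • x n) := by abel
  rw [Function.comp_apply, dist_eq_norm, hsplit]
  refine lt_of_le_of_lt (norm_add₃_le) ?_
  rw [norm_sub_rev (∑ n ∈ Finset.range N, β n • x n)]
  linarith
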